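/- For any integer b ≥ 2 and any real t with ‖t‖ ≤ 1/b (where ‖t‖ is the distance from t to the nearest integer), one has |sin(πbt)/(b sin(πt))| ≤ exp(−(π²/6)(b²−1)‖t‖²). -/
import Mathlib


open Classical
noncomputable def Kb (b : ℕ) (x : ℝ) : ℝ :=
  if ∃ n : ℤ, x = n then (-1 : ℝ) ^ (⌊x⌋ * ((b : ℤ) - 1))
  else Real.sin (Real.pi * b * x) / (b * Real.sin (Real.pi * x))

/-- Distance from a real number to the nearest integer. -/
noncomputable def nint (x : ℝ) : ℝ := |x - round x|


section CoreLemma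
open Real Filter


-- core inequality
lemma core (b : ℕ) (hb : 2 ≤ b) (u : ℝ) (hu : 0 < u) (hub : u ≤ 1 / b) :
    Real.sin (Real.pi * (b * u)) ≤
      (b * Real.sin (Real.pi * u)) *
        Real.exp (-(Real.pi ^ 2 / 6) * ((b : ℝ) ^ 2 - 1) * u ^ 2) := by
  have hb0 : (0:ℝ) < b := by positivity
  have hbu1 : (b:ℝ) * u ≤ 1 := by
    rw [le_div_iff₀ hb0] at hub; linarith [hub]
  have hb2 : (2:ℝ) ≤ (b:ℝ) := by exact_mod_cast hb
  have hu1 : u < 1 := by nlinarith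
  set c : ℝ := ((b : ℝ) ^ 2 - 1) * u ^ 2 with hc
  have hc0 : 0 ≤ c := by
    have h1 : (1:ℝ) ≤ (b:ℝ)^2 := by nlinarith
    exact mul_nonneg (by linarith) (sq_nonneg u)
  -- partial sums of 1/(j+1)^2 tend to π²/6
  have hsum : Tendsto (fun N : ℕ => ∑ j ∈ Finset.range N, (1:ℝ) / ((j:ℝ)+1)^2)
      atTop (nhds (π ^ 2 / 6)) := by
    have h0 := (hasSum_nat_add_iff' (f := fun n : ℕ => (1:ℝ) / (n:ℝ)^2) 1).2 hasSum_zeta_two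
    have h1 := h0.tendsto_sum_nat
    have he : ∀ N : ℕ, ∑ j ∈ Finset.range N, (1:ℝ) / ((j:ℝ)+1)^2
        = ∑ j ∈ Finset.range N, (1:ℝ) / ((j+1 : ℕ) : ℝ)^2 := by
      intro N; apply Finset.sum_congr rfl; intro j _; push_cast; ring
    have he2 : (π ^ 2 / 6 - ∑ i ∈ Finset.range 1, (1:ℝ)/(i:ℝ)^2) = π ^ 2 / 6 := by simp
    rw [he2] at h1
    exact h1.congr (fun N => (he N).symm)
  have hP := Real.tendsto_euler_sin_prod ((b:ℝ) * u)
  have hQ := (Real.tendsto_euler_sin_prod u).const_mul (b:ℝ)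
  have hE : Tendsto (fun N : ℕ => Real.exp (-c * ∑ j ∈ Finset.range N, (1:ℝ)/((j:ℝ)+1)^2))
      atTop (nhds (Real.exp (-c * (π^2/6)))) :=
    (Real.continuous_exp.tendsto _).comp ((hsum.const_mul (-c)))
  have key : ∀ N : ℕ,
      π * ((b:ℝ)*u) * ∏ j ∈ Finset.range N, (1 - ((b:ℝ)*u)^2/((j:ℝ)+1)^2) ≤
      ((b:ℝ) * (π * u * ∏ j ∈ Finset.range N, (1 - u^2/((j:ℝ)+1)^2))) *
        Real.exp (-c * ∑ j ∈ Finset.range N, (1:ℝ)/((j:ℝ)+1)^2) := by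
    intro N
    have hterm : ∀ j ∈ Finset.range N,
        (1 - ((b:ℝ)*u)^2/((j:ℝ)+1)^2) ≤
          (1 - u^2/((j:ℝ)+1)^2) * Real.exp (-c * (1/((j:ℝ)+1)^2)) := by
      intro j _
      have hj1 : (1:ℝ) ≤ ((j:ℝ)+1) := by
        linarith [Nat.cast_nonneg (α := ℝ) j]
      have hj0 : (0:ℝ) < ((j:ℝ)+1)^2 := by positivity
      have h1 : (1 - ((b:ℝ)*u)^2/((j:ℝ)+1)^2) ≤
          (1 - u^2/((j:ℝ)+1)^2) * (1 - c/((j:ℝ)+1)^2) := by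
        have hdiff : (1 - u^2/((j:ℝ)+1)^2) * (1 - c/((j:ℝ)+1)^2)
            - (1 - ((b:ℝ)*u)^2/((j:ℝ)+1)^2)
            = c * u^2 / (((j:ℝ)+1)^2 * ((j:ℝ)+1)^2) := by
          rw [hc]; field_simp; ring
        nlinarith [div_nonneg (mul_nonneg hc0 (sq_nonneg u)) (le_of_lt (mul_pos hj0 hj0))]
      have h2 : (1 - c/((j:ℝ)+1)^2) ≤ Real.exp (-c * (1/((j:ℝ)+1)^2)) := by
        have h := Real.add_one_le_exp (-c * (1/((j:ℝ)+1)^2))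
        have heq : 1 - c/((j:ℝ)+1)^2 = -c * (1/((j:ℝ)+1)^2) + 1 := by ring
        linarith
      have hden : (0:ℝ) ≤ 1 - u^2/((j:ℝ)+1)^2 := by
        have : u^2 ≤ ((j:ℝ)+1)^2 := by nlinarith
        rw [sub_nonneg, div_le_one hj0]; exact this
      calc (1 - ((b:ℝ)*u)^2/((j:ℝ)+1)^2)
          ≤ (1 - u^2/((j:ℝ)+1)^2) * (1 - c/((j:ℝ)+1)^2) := h1
        _ ≤ (1 - u^2/((j:ℝ)+1)^2) * Real.exp (-c * (1/((j:ℝ)+1)^2)) := by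
            exact mul_le_mul_of_nonneg_left h2 hden
    have hnonneg : ∀ j ∈ Finset.range N, (0:ℝ) ≤ 1 - ((b:ℝ)*u)^2/((j:ℝ)+1)^2 := by
      intro j _
      have hj1 : (1:ℝ) ≤ ((j:ℝ)+1) := by
        linarith [Nat.cast_nonneg (α := ℝ) j]
      have hj0 : (0:ℝ) < ((j:ℝ)+1)^2 := by positivity
      have hbu0 : 0 < (b:ℝ)*u := by positivity
      have : ((b:ℝ)*u)^2 ≤ ((j:ℝ)+1)^2 := by nlinarith
      rw [sub_nonneg, div_le_one hj0]; exact this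
    have hprod := Finset.prod_le_prod hnonneg hterm
    have hprodexp : ∏ j ∈ Finset.range N,
        ((1 - u^2/((j:ℝ)+1)^2) * Real.exp (-c * (1/((j:ℝ)+1)^2)))
        = (∏ j ∈ Finset.range N, (1 - u^2/((j:ℝ)+1)^2)) *
          Real.exp (-c * ∑ j ∈ Finset.range N, (1:ℝ)/((j:ℝ)+1)^2) := by
      rw [Finset.prod_mul_distrib, ← Real.exp_sum, Finset.mul_sum]
    have hpi : (0:ℝ) ≤ π * ((b:ℝ)*u) := by positivity
    calc π * ((b:ℝ)*u) * ∏ j ∈ Finset.range N, (1 - ((b:ℝ)*u)^2/((j:ℝ)+1)^2)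
        ≤ π * ((b:ℝ)*u) * ((∏ j ∈ Finset.range N, (1 - u^2/((j:ℝ)+1)^2)) *
            Real.exp (-c * ∑ j ∈ Finset.range N, (1:ℝ)/((j:ℝ)+1)^2)) := by
          refine mul_le_mul_of_nonneg_left ?_ hpi
          rw [← hprodexp]; exact hprod
      _ = ((b:ℝ) * (π * u * ∏ j ∈ Finset.range N, (1 - u^2/((j:ℝ)+1)^2))) *
            Real.exp (-c * ∑ j ∈ Finset.range N, (1:ℝ)/((j:ℝ)+1)^2) := by ring
  have hlim : Real.sin (π * ((b:ℝ)*u)) ≤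
      (b:ℝ) * Real.sin (π * u) * Real.exp (-c * (π^2/6)) :=
    le_of_tendsto_of_tendsto' hP (hQ.mul hE) key
  calc Real.sin (π * ((b:ℝ)*u)) ≤ (b:ℝ) * Real.sin (π * u) * Real.exp (-c * (π^2/6)) := hlim
    _ = (b:ℝ) * Real.sin (π * u) * Real.exp (-(π^2/6) * ((b:ℝ)^2-1) * u^2) := by
        rw [hc]; ring_nf

end CoreLemma

lemma abs_neg_one_zpow' (k : ℤ) : |(-1:ℝ)^k| = 1 := by
  rcases Int.even_or_odd k with h | h
  · rw [h.neg_one_zpow, abs_one]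
  · rw [h.neg_one_zpow]; norm_num

theorem stmt8 (b : ℕ) (hb : 2 ≤ b) (t : ℝ) (ht : nint t ≤ 1 / b) :
    |Kb b t| ≤ Real.exp (-(Real.pi ^ 2 / 6) * ((b : ℝ) ^ 2 - 1) * nint t ^ 2) := by
  by_cases hint : ∃ n : ℤ, t = n
  · obtain ⟨n, rfl⟩ := hint
    have hnint : nint (n : ℝ) = 0 := by simp [nint]
    rw [Kb, if_pos ⟨n, rfl⟩, hnint]
    have : |(-1 : ℝ) ^ (⌊(n:ℝ)⌋ * ((b : ℤ) - 1))| = 1 := abs_neg_one_zpow' _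
    rw [this]
    norm_num
  · rw [Kb, if_neg hint]
    set n : ℤ := round t with hn
    set s : ℝ := t - n with hs
    set u : ℝ := nint t with hu'
    have huabs : u = |s| := rfl
    have hb0 : (0:ℝ) < b := by positivity
    have hu0 : 0 < u := by
      rw [huabs]
      rcases eq_or_lt_of_le (abs_nonneg s) with h | h
      · exfalso; apply hint
        have : s = 0 := by rwa [eq_comm, abs_eq_zero] at h
        exact ⟨n, by linarith [this]⟩
      · exact h
    have hub : u ≤ 1 / b := ht
    have hb2 : (2:ℝ) ≤ (b:ℝ) := by exact_mod_cast hb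
    have hu12 : u ≤ 1/2 := le_trans hub (by
      rw [div_le_div_iff₀ hb0 (by norm_num)]; linarith)
    -- |sin (π t)| = sin (π u)
    have hts : t = s + n := by rw [hs]; ring
    have h1 : Real.sin (Real.pi * t) = (-1:ℝ)^n * Real.sin (Real.pi * s) := by
      rw [hts]
      have : Real.pi * (s + n) = Real.pi * s + n * Real.pi := by ring
      rw [this, Real.sin_add_int_mul_pi]
    have h2 : Real.sin (Real.pi * (b:ℝ) * t)
        = (-1:ℝ)^((b:ℤ) * n) * Real.sin (Real.pi * (b:ℝ) * s) := by
      rw [hts]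
      have : Real.pi * (b:ℝ) * (s + n) = Real.pi * (b:ℝ) * s + ((b:ℤ) * n : ℤ) * Real.pi := by
        push_cast; ring
      rw [this, Real.sin_add_int_mul_pi]
    have hs12 : |s| ≤ 1/2 := huabs ▸ hu12
    have habs1 : |Real.sin (Real.pi * t)| = Real.sin (Real.pi * u) := by
      rw [h1, abs_mul, abs_neg_one_zpow', one_mul, huabs]
      rcases le_or_gt 0 s with h | h
      · rw [abs_of_nonneg h]
        refine abs_of_nonneg (Real.sin_nonneg_of_nonneg_of_le_pi (by positivity) ?_)
        have : s ≤ 1/2 := by rw [abs_of_nonneg h] at hs12; exact hs12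
        nlinarith [Real.pi_pos]
      · rw [abs_of_neg h]
        have heq : Real.pi * -s = -(Real.pi * s) := by ring
        rw [heq, Real.sin_neg]
        refine abs_of_nonpos (Real.sin_nonpos_of_nonpos_of_neg_pi_le ?_ ?_)
        · nlinarith [Real.pi_pos]
        · have : -s ≤ 1/2 := by rw [abs_of_neg h] at hs12; exact hs12
          nlinarith [Real.pi_pos]
    have habs2 : |Real.sin (Real.pi * (b:ℝ) * t)| = Real.sin (Real.pi * ((b:ℝ) * u)) := by
      rw [h2, abs_mul, abs_neg_one_zpow', one_mul]
      have hsin_nonneg : 0 ≤ Real.sin (Real.pi * ((b:ℝ) * u)) := by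
        apply Real.sin_nonneg_of_nonneg_of_le_pi
        · positivity
        · have : (b:ℝ) * u ≤ 1 := by
            rw [le_div_iff₀ hb0] at hub; linarith
          nlinarith [Real.pi_pos]
      rcases le_or_gt 0 s with h | h
      · have heq : Real.pi * (b:ℝ) * s = Real.pi * ((b:ℝ) * u) := by
          rw [huabs, abs_of_nonneg h]; ring
        rw [heq]
        exact abs_of_nonneg hsin_nonneg
      · have heq : Real.pi * (b:ℝ) * s = -(Real.pi * ((b:ℝ) * u)) := by
          rw [huabs, abs_of_neg h]; ring
        rw [heq, Real.sin_neg, abs_neg]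
        exact abs_of_nonneg hsin_nonneg
    have hsinu_pos : 0 < Real.sin (Real.pi * u) := by
      apply Real.sin_pos_of_pos_of_lt_pi (by positivity)
      nlinarith [Real.pi_pos]
    have hcore := core b hb u hu0 hub
    rw [abs_div, abs_mul, Nat.abs_cast, habs1, habs2]
    rw [div_le_iff₀ (by positivity)]
    calc Real.sin (Real.pi * ((b:ℝ) * u))
        ≤ (b:ℝ) * Real.sin (Real.pi * u) *
            Real.exp (-(Real.pi ^ 2 / 6) * ((b : ℝ) ^ 2 - 1) * u ^ 2) := hcore
      _ = Real.exp (-(Real.pi ^ 2 / 6) * ((b : ℝ) ^ 2 - 1) * u ^ 2) *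
            ((b:ℝ) * Real.sin (Real.pi * u)) := by ring
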